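/- Let Σ ∈ ℝ^{2d×2d} be symmetric positive definite with block decomposition Σ = [[Σ_xx, Σ_xy], [Σ_yx, Σ_yy]] into d×d blocks, let θ* = (θ*_xᵀ, 0ᵀ)ᵀ ∈ ℝ^{2d}, let P_y be the orthogonal projector onto the last d coordinates, and let τ > 0. Then θ*ᵀ Σ (Σ + τI)^{-1} P_y Σ θ* = τ · θ*_xᵀ (Σ_xx + τI)^{-1} Σ_xy ( Σ_yy + τI − Σ_yx (Σ_xx + τI)^{-1} Σ_xy )^{-1} Σ_yx θ*_x, i.e., the deterministic spurious-correlation functional equals τ times the corresponding expression involving the Schur complement of Σ + τI with respect to its top-left block. -/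

import Mathlib

open Matrix

noncomputable section

/-- Projector onto the last `d` coordinates (the spurious feature `y`). -/
def Py (d : ℕ) : Matrix (Fin d ⊕ Fin d) (Fin d ⊕ Fin d) ℝ :=
  Matrix.fromBlocks 0 0 0 1

/-- Schur-complement representation of the deterministic spurious-correlation
functional: for `Σ = [[Σ_xx, Σ_xy], [Σ_yx, Σ_yy]]` positive definite, `θ* = (θ*_x, 0)` and
`τ > 0`,
`θ*ᵀ Σ (Σ + τI)⁻¹ P_y Σ θ* = τ θ*_xᵀ (Σ_xx + τI)⁻¹ Σ_xy (Σ_yy + τI − Σ_yx(Σ_xx + τI)⁻¹Σ_xy)⁻¹ Σ_yx θ*_x`. -/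
theorem deterministic_spurious_correlation_schur_form
    (d : ℕ) (Sxx Sxy Syx Syy : Matrix (Fin d) (Fin d) ℝ)
    (Sig : Matrix (Fin d ⊕ Fin d) (Fin d ⊕ Fin d) ℝ)
    (hSig : Sig = Matrix.fromBlocks Sxx Sxy Syx Syy)
    (hpd : Sig.PosDef)
    (θx : Fin d → ℝ) (τ : ℝ) (hτ : 0 < τ) :
    dotProduct (Sum.elim θx (0 : Fin d → ℝ))
        ((Sig * (Sig + τ • 1)⁻¹ * Py d * Sig).mulVec (Sum.elim θx 0)) =
      τ * dotProduct θx
        (((Sxx + τ • 1)⁻¹ * Sxy *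
            (Syy + τ • 1 - Syx * (Sxx + τ • 1)⁻¹ * Sxy)⁻¹ * Syx).mulVec θx) := by
  unfold Py
  set A11 := Sxx + τ • (1 : Matrix (Fin d) (Fin d) ℝ) with hA11def
  set A22 := Syy + τ • (1 : Matrix (Fin d) (Fin d) ℝ) with hA22def
  set A := Sig + τ • (1 : Matrix (Fin d ⊕ Fin d) (Fin d ⊕ Fin d) ℝ) with hAdef
  set S := A22 - Syx * A11⁻¹ * Sxy with hSdef
  have hτpd : ∀ (n : Type) [Fintype n] [DecidableEq n],
      (τ • (1 : Matrix n n ℝ)).PosDef := by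
    intro n _ _
    rw [Matrix.smul_one_eq_diagonal]
    exact Matrix.PosDef.diagonal fun _ => hτ
  have hApd : A.PosDef := hpd.add (hτpd _)
  have hAblocks : A = Matrix.fromBlocks A11 Sxy Syx A22 := by
    rw [hAdef, hSig, ← Matrix.fromBlocks_one, Matrix.fromBlocks_smul,
      Matrix.fromBlocks_add]
    simp
    exact ⟨rfl, rfl⟩
  have hSxxpd : Sxx.PosDef := by
    refine Matrix.PosDef.of_dotProduct_mulVec_pos ?_ ?_
    · exact (Matrix.isHermitian_fromBlocks_iff.mp (hSig ▸ hpd.1)).1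
    · intro x hx
      have hne : Sum.elim x (0 : Fin d → ℝ) ≠ 0 := by
        intro h
        exact hx (funext fun i => congrFun h (Sum.inl i))
      have := hpd.dotProduct_mulVec_pos hne
      rw [hSig] at this
      simpa [Matrix.fromBlocks_mulVec, Function.star_sumElim,
        sumElim_dotProduct_sumElim] using this
  have hA11pd : A11.PosDef := hSxxpd.add (hτpd _)
  haveI iA : Invertible A := hApd.isUnit.invertible
  haveI iA11 : Invertible A11 := hA11pd.isUnit.invertible
  haveI iAb : Invertible (Matrix.fromBlocks A11 Sxy Syx A22) := hAblocks ▸ iA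
  have hinvA11 : ⅟A11 = A11⁻¹ := invOf_eq_nonsing_inv A11
  haveI iS' : Invertible (A22 - Syx * ⅟A11 * Sxy) :=
    Matrix.invertibleOfFromBlocks₁₁Invertible A11 Sxy Syx A22
  haveI iS : Invertible S := by rw [hSdef, ← hinvA11]; exact iS'
  have hAinv : A⁻¹ = Matrix.fromBlocks
      (A11⁻¹ + A11⁻¹ * Sxy * S⁻¹ * Syx * A11⁻¹) (-(A11⁻¹ * Sxy * S⁻¹))
      (-(S⁻¹ * Syx * A11⁻¹)) S⁻¹ := by
    rw [hAblocks, ← invOf_eq_nonsing_inv, Matrix.invOf_fromBlocks₁₁_eq]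
    simp only [hinvA11, invOf_eq_nonsing_inv, hSdef]
  -- Sig * A⁻¹ = 1 - τ • A⁻¹
  have hSigA : Sig * A⁻¹ = 1 - τ • A⁻¹ := by
    have h1 : Sig = A - τ • 1 := by rw [hAdef]; abel
    rw [h1, Matrix.sub_mul, Matrix.mul_nonsing_inv _ (Matrix.isUnit_iff_isUnit_det A |>.mp hApd.isUnit),
      Matrix.smul_mul, Matrix.one_mul]
  set θ := Sum.elim θx (0 : Fin d → ℝ) with hθdef
  have hv : (Matrix.fromBlocks 0 0 0 1 * Sig) *ᵥ θ = Sum.elim (0 : Fin d → ℝ) (Syx *ᵥ θx) := by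
    rw [hSig, Matrix.fromBlocks_multiply, hθdef]
    simp [Matrix.fromBlocks_mulVec]
  have hLHS : (Sig * A⁻¹ * Matrix.fromBlocks 0 0 0 1 * Sig) *ᵥ θ
      = (1 - τ • A⁻¹) *ᵥ (Sum.elim (0 : Fin d → ℝ) (Syx *ᵥ θx)) := by
    rw [show Sig * A⁻¹ * Matrix.fromBlocks 0 0 0 1 * Sig
        = (Sig * A⁻¹) * (Matrix.fromBlocks 0 0 0 1 * Sig) by
      simp only [Matrix.mul_assoc], ← Matrix.mulVec_mulVec, hv, hSigA]
  rw [hLHS, hAinv]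
  simp [Matrix.sub_mulVec, Matrix.smul_mulVec, Matrix.fromBlocks_mulVec,
    sumElim_dotProduct_sumElim, Matrix.neg_mulVec, Matrix.mulVec_mulVec,
    Matrix.mul_assoc, hθdef]


end
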